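/- Let G = (V, E) be an undirected graph on V = {1,...,q}, let (D, μ) be a σ-finite measure space, let m ∈ ℕ, and let φ_1, ..., φ_m be an orthonormal family in L²(μ). For l = 1, ..., m let Σ_l and Σ*_l be q×q real symmetric positive definite matrices, write σ_{lij} = (Σ_l)_{ij}, σ*_{lij} = (Σ*_l)_{ij}, ω*_{lij} = ((Σ*_l)⁻¹)_{ij}. Define, as elements of L²(μ ⊗ μ), C^m_{ij} = Σ_{l=1}^m σ_{lij} (φ_l ⊗ φ_l), C*_{ij} = Σ_{l=1}^m σ*_{lij} (φ_l ⊗ φ_l), and K*_{ij} = Σ_{l=1}^m (−ω*_{lij} / (ω*_{lii} ω*_{ljj} − ω*_{lij}²)) (φ_l ⊗ φ_l). Then the following are equivalent: (a) C*_{ij} = C^m_{ij} in L²(μ ⊗ μ) for every pair with i = j or (i,j) ∈ E, and K*_{ij} = 0 in L²(μ ⊗ μ) for every pair with i ≠ j and (i,j) ∉ E; (b) for every l = 1, ..., m, Σ*_l is the covariance selection of Σ_l with respect to G. -/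

import Mathlib

open MeasureTheory Filter Topology Finset

/-- `B` is the covariance selection (Dempster) of `A` with respect to the graph `G`:
`B` is positive definite, agrees with `A` on the diagonal and the edge set, and its
inverse vanishes off the diagonal and the edge set. -/
def IsCovSel {q : ℕ} (G : SimpleGraph (Fin q)) (A B : Matrix (Fin q) (Fin q) ℝ) : Prop :=
  B.PosDef ∧ (∀ i j, (i = j ∨ G.Adj i j) → B i j = A i j) ∧
    ∀ i j, i ≠ j → ¬ G.Adj i j → B⁻¹ i j = 0

open Matrix in
lemma posdef_diag_aux {q : ℕ} {M : Matrix (Fin q) (Fin q) ℝ} (hM : M.PosDef) (i : Fin q) :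
    0 < M i i := by
  have := hM.dotProduct_mulVec_pos (x := Pi.single i 1) (by simp [Function.ne_iff])
  simpa [mulVec_single, single_dotProduct] using this

open Matrix in
lemma posdef_det2_aux {q : ℕ} {M : Matrix (Fin q) (Fin q) ℝ} (hM : M.PosDef) {i j : Fin q}
    (hij : i ≠ j) : 0 < M i i * M j j - (M i j) ^ 2 := by
  have hjj : 0 < M j j := posdef_diag_aux hM j
  have hsym : M j i = M i j := by simpa using hM.1.apply i j
  set x : Fin q → ℝ := Pi.single i (M j j) + Pi.single j (-(M i j)) with hx
  have hxne : x ≠ 0 := by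
    intro h0
    have : x i = 0 := by rw [h0]; rfl
    rw [hx] at this
    simp [Pi.single_apply, hij, Ne.symm hij] at this
    exact hjj.ne' this
  have hq := hM.dotProduct_mulVec_pos hxne
  have hval : dotProduct (star x) (M *ᵥ x) = M j j * (M i i * M j j - (M i j) ^ 2) := by
    rw [hx]
    simp only [star_trivial, mulVec_add, mulVec_single, add_dotProduct, single_dotProduct,
      dotProduct_add, Pi.add_apply, mul_one]
    simp [hsym]
    ring
  rw [hval] at hq
  nlinarith

lemma coeff_zero_aux {D : Type*} [MeasurableSpace D] (μ : Measure D) [SigmaFinite μ] {m : ℕ}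
    (φ : Fin m → Lp ℝ 2 μ) (hφ : Orthonormal ℝ φ) (c : Fin m → ℝ)
    (h : (fun st : D × D => ∑ l, c l * (φ l st.1 * φ l st.2)) =ᵐ[μ.prod μ] fun _ => (0 : ℝ)) :
    ∀ k, c k = 0 := by
  intro k
  have hint : ∀ l l' : Fin m, Integrable (fun s => φ l s * φ l' s) μ := fun l l' => by
    simpa [RCLike.inner_apply, conj_trivial] using L2.integrable_inner (𝕜 := ℝ) (φ l') (φ l)
  have hinner : ∀ l : Fin m, (∫ s, φ l s * φ k s ∂μ) = if l = k then (1:ℝ) else 0 := by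
    intro l
    have h1 : (inner ℝ (φ l) (φ k) : ℝ) = ∫ s, φ l s * φ k s ∂μ := by
      rw [L2.inner_def]; simp [RCLike.inner_apply, conj_trivial, mul_comm]
    rw [← h1, orthonormal_iff_ite.mp hφ]
  have h0 : (∫ st : D × D, (∑ l, c l * ((φ l st.1 * φ k st.1) * (φ l st.2 * φ k st.2)))
      ∂(μ.prod μ)) = 0 := by
    rw [integral_eq_zero_of_ae]
    filter_upwards [h] with st hst
    have : (∑ l, c l * ((φ l st.1 * φ k st.1) * (φ l st.2 * φ k st.2)))
        = (∑ l, c l * (φ l st.1 * φ l st.2)) * (φ k st.1 * φ k st.2) := by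
      rw [sum_mul]; congr 1; ext l; ring
    rw [this, hst]; simp
  have h1 : (∫ st : D × D, (∑ l, c l * ((φ l st.1 * φ k st.1) * (φ l st.2 * φ k st.2)))
      ∂(μ.prod μ)) = c k := by
    rw [integral_finset_sum]
    · have : ∀ l : Fin m, (∫ st : D × D, c l * ((φ l st.1 * φ k st.1) * (φ l st.2 * φ k st.2))
          ∂(μ.prod μ)) = c l * ((if l = k then (1:ℝ) else 0) * (if l = k then (1:ℝ) else 0)) := by
        intro l
        rw [integral_const_mul,
          integral_prod_mul (μ := μ) (ν := μ) (f := fun s => φ l s * φ k s)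
            (g := fun s => φ l s * φ k s), hinner l]
      simp_rw [this]
      simp
    · intro l _
      exact (((hint l k).mul_prod (hint l k))).const_mul _
  rw [h1] at h0; exact h0

theorem stmt_1
    {D : Type*} [MeasurableSpace D] (μ : Measure D) [SigmaFinite μ]
    (q m : ℕ) (G : SimpleGraph (Fin q))
    (φ : Fin m → Lp ℝ 2 μ) (hφ : Orthonormal ℝ φ)
    (Sig Sigs : Fin m → Matrix (Fin q) (Fin q) ℝ)
    (hSig : ∀ l, (Sig l).PosDef) (hSigs : ∀ l, (Sigs l).PosDef) :
    -- (a): `C*_{ij} = C^m_{ij}` in `L²(μ ⊗ μ)` on the diagonal and the edge set, and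
    -- `K*_{ij} = 0` in `L²(μ ⊗ μ)` off the diagonal and the edge set, where
    -- `C^m_{ij} = ∑ l, σ_{lij} (φ_l ⊗ φ_l)`, `C*_{ij} = ∑ l, σ*_{lij} (φ_l ⊗ φ_l)` and
    -- `K*_{ij} = ∑ l, (-ω*_{lij}/(ω*_{lii} ω*_{ljj} - ω*_{lij}²)) (φ_l ⊗ φ_l)`;
    -- (b): each `Σ*_l` is the covariance selection of `Σ_l` with respect to `G`.
    ((∀ i j, (i = j ∨ G.Adj i j) →
        (fun st : D × D => ∑ l, Sigs l i j * (φ l st.1 * φ l st.2)) =ᵐ[μ.prod μ]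
          fun st : D × D => ∑ l, Sig l i j * (φ l st.1 * φ l st.2)) ∧
      (∀ i j, i ≠ j → ¬ G.Adj i j →
        (fun st : D × D => ∑ l,
          (-(Sigs l)⁻¹ i j / ((Sigs l)⁻¹ i i * (Sigs l)⁻¹ j j - ((Sigs l)⁻¹ i j) ^ 2)) *
            (φ l st.1 * φ l st.2)) =ᵐ[μ.prod μ] fun _ => (0 : ℝ))) ↔
      ∀ l, IsCovSel G (Sig l) (Sigs l) := by
  constructor
  · rintro ⟨ha1, ha2⟩ l
    refine ⟨hSigs l, ?_, ?_⟩
    · intro i j hij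
      have hc : ∀ k, Sigs k i j - Sig k i j = 0 := by
        apply coeff_zero_aux μ φ hφ
        filter_upwards [ha1 i j hij] with st hst
        simp only [sub_mul, Finset.sum_sub_distrib]
        rw [hst]; simp
      have := hc l; linarith
    · intro i j hne hadj
      have hc := coeff_zero_aux μ φ hφ _ (ha2 i j hne hadj) l
      have hd := posdef_det2_aux (hSigs l).inv hne
      rcases div_eq_zero_iff.mp hc with h | h
      · linarith [neg_eq_zero.mp h]
      · linarith
  · intro hb
    constructor
    · intro i j hij
      apply Filter.Eventually.of_forall
      intro st
      exact Finset.sum_congr rfl fun l _ => by rw [(hb l).2.1 i j hij]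
    · intro i j hne hadj
      apply Filter.Eventually.of_forall
      intro st
      have hz : ∀ l, (Sigs l)⁻¹ i j = 0 := fun l => (hb l).2.2 i j hne hadj
      simp [hz]
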